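/- Let E be the group generated by elements a and a_α (α < ω₁) subject to the relations a^p = a_α^p = [a, a_α] = 1 and [a_α, a_β] = a for α < β (p an odd prime). Then { a_α : α < ω₁ } is a set of ω₁ pairwise non-commuting elements of E; consequently E does not embed into any direct sum of finite groups. -/

import Mathlib

open scoped commutatorElement

theorem extraspecial_group_not_in_directSum
    {ι : Type} [LinearOrder ι] (hι : Cardinal.mk ι = Cardinal.aleph 1)
    {E : Type} [Group E] (p : ℕ) (hp : p.Prime) (hodd : p ≠ 2)
    (a : E) (f : ι → E) (ha : a ≠ 1)
    (hap : a ^ p = 1) (hfp : ∀ α, f α ^ p = 1)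
    (hcomm : ∀ α, a * f α = f α * a)
    (hrel : ∀ α β, α < β → ⁅f α, f β⁆ = a) :
    (Function.Injective f ∧ ∀ α β, α ≠ β → f α * f β ≠ f β * f α) ∧
    ∀ (I : Type) (H : I → Type) [∀ i, Group (H i)] [∀ i, Finite (H i)],
      ¬ ∃ e : E →* (∀ i, H i),
        Function.Injective e ∧ ∀ x : E, {i | e x i ≠ 1}.Finite := by
  have hne : ∀ α β, α < β → f α * f β ≠ f β * f α := by
    intro α β h hc
    have h1 : ⁅f α, f β⁆ = 1 := commutatorElement_eq_one_iff_commute.2 hc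
    rw [hrel α β h] at h1
    exact ha h1
  have hsymm : ∀ α β, α ≠ β → f α * f β ≠ f β * f α := by
    intro α β h
    rcases h.lt_or_gt with h | h
    · exact hne α β h
    · intro hc; exact hne β α h hc.symm
  refine ⟨⟨?_, hsymm⟩, ?_⟩
  · intro α β hfb
    by_contra h
    exact hsymm α β h (by rw [hfb])
  · rintro I H _ _ ⟨e, he, -⟩
    have hea : e a ≠ 1 := fun h => ha (he (h.trans (map_one e).symm))
    obtain ⟨i₀, hi₀⟩ : ∃ i, e a i ≠ 1 := by
      by_contra h; push_neg at h
      exact hea (funext h)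
    have hI : Infinite ι := Cardinal.infinite_iff.2 (by
      rw [hι]; exact Cardinal.aleph0_le_aleph 1)
    set g : ι → H i₀ := fun α => e (f α) i₀ with hg
    have hginj : Function.Injective g := by
      intro α β hab
      by_contra h
      have key : ∀ γ δ : ι, γ < δ → g γ ≠ g δ := by
        intro γ δ hlt heq
        have h1 : e ⁅f γ, f δ⁆ = e a := by rw [hrel γ δ hlt]
        rw [map_commutatorElement] at h1
        have h2 : ⁅e (f γ), e (f δ)⁆ i₀ = e a i₀ := by rw [h1]
        have h3 : ⁅e (f γ) i₀, e (f δ) i₀⁆ = e a i₀ := by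
          simpa [commutatorElement_def] using h2
        rw [show e (f γ) i₀ = g γ from rfl, show e (f δ) i₀ = g δ from rfl,
          heq, commutatorElement_self] at h3
        exact hi₀ h3.symm
      rcases Ne.lt_or_gt h with hlt | hlt
      · exact key α β hlt hab
      · exact key β α hlt hab.symm
    obtain ⟨α, β, hne', heq⟩ := Finite.exists_ne_map_eq_of_infinite g
    exact hne' (hginj heq)
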